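/- An fb-tableau of size n is uniquely determined by its changeable cells together with their types: if two fb-tableaux S and T of size n have the same set of changeable cells of type I, the same set of changeable cells of type II, and the same set of changeable cells of type III, then S = T. -/
import Mathlib


open scoped Classical

namespace EsTam

/-- A cell `(i, j)`: `i` is the row index, `j` the column index. -/
abbrev Cell := ℕ × ℕ

/-- Membership in the staircase shape of size `n`: rows `1` and `2` consist of the
cells `(i, j)` with `1 ≤ j ≤ n`, and row `i` for `3 ≤ i ≤ n` consists of the cells
`(i, j)` with `i - 1 ≤ j ≤ n`. -/
def IsCell (n : ℕ) (c : Cell) : Prop :=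
  1 ≤ c.1 ∧ c.1 ≤ n ∧ 1 ≤ c.2 ∧ c.2 ≤ n ∧ (c.1 ≤ 2 ∨ c.1 - 1 ≤ c.2)

/-- The root cell `(1, n)`. -/
def root (n : ℕ) : Cell := (1, n)

/-- The border cells `(i, i - 1)` for `2 ≤ i ≤ n`. -/
def IsBorder (n : ℕ) (c : Cell) : Prop :=
  2 ≤ c.1 ∧ c.1 ≤ n ∧ c.2 = c.1 - 1

/-- An fb-tableau of size `n`: a set of cells of the staircase shape containing
the root and all border cells, and such that every cell other than the root has a
cell of the tableau strictly to its left in its row (same `i`, larger `j`) or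
strictly above it in its column (same `j`, smaller `i`). -/
structure FB (n : ℕ) where
  cells : Set Cell
  isCell_of_mem : ∀ c ∈ cells, IsCell n c
  root_mem : root n ∈ cells
  border_mem : ∀ c : Cell, IsBorder n c → c ∈ cells
  supported : ∀ c ∈ cells, c ≠ root n →
    (∃ j', c.2 < j' ∧ ((c.1, j') : Cell) ∈ cells) ∨
    (∃ i', i' < c.1 ∧ ((i', c.2) : Cell) ∈ cells)

variable {n : ℕ}

/-- `c` is a left-arrow of `T`: a cell of `T`, other than the root, with no cell of
`T` strictly to its left in its row. -/
def IsLeftArrow (T : FB n) (c : Cell) : Prop :=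
  c ∈ T.cells ∧ c ≠ root n ∧ ∀ j', c.2 < j' → ((c.1, j') : Cell) ∉ T.cells

/-- `c` is an up-arrow of `T`: a cell of `T`, other than the root, with no cell of
`T` strictly above it in its column. -/
def IsUpArrow (T : FB n) (c : Cell) : Prop :=
  c ∈ T.cells ∧ c ≠ root n ∧ ∀ i', i' < c.1 → ((i', c.2) : Cell) ∉ T.cells

/-- The row space of `T`: cells lying, in their row, weakly to the right of the
root or of a left-arrow of `T`. -/
def RowSp (T : FB n) : Set Cell :=
  {c | IsCell n c ∧ ∃ j', c.2 ≤ j' ∧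
    (((c.1, j') : Cell) = root n ∨ IsLeftArrow T (c.1, j'))}

/-- The column space of `T`: cells lying, in their column, weakly below the root or
an up-arrow of `T`. -/
def ColSp (T : FB n) : Set Cell :=
  {c | IsCell n c ∧ ∃ i', i' ≤ c.1 ∧
    (((i', c.2) : Cell) = root n ∨ IsUpArrow T (i', c.2))}

/-- `c` is a free cell of `T`: it lies strictly below the up-arrow of `T` in its
column and strictly to the right of the left-arrow of `T` in its row. -/
def IsFree (T : FB n) (c : Cell) : Prop :=
  IsCell n c ∧ (∃ i', i' < c.1 ∧ IsUpArrow T (i', c.2)) ∧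
    (∃ j', c.2 < j' ∧ IsLeftArrow T (c.1, j'))

/-- The relation `S ⊲ T` on fb-tableaux of size `n`. -/
def Lhd (S T : FB n) : Prop :=
  ColSp S ⊆ ColSp T ∧ RowSp T ⊆ RowSp S ∧
    ∀ c : Cell, IsFree S c → IsFree T c → c ∈ S.cells → c ∈ T.cells

/-- `T` covers `S` in `esTam n`. -/
def CovRel (S T : FB n) : Prop :=
  Lhd S T ∧ S ≠ T ∧ ∀ U : FB n, Lhd S U → Lhd U T → U = S ∨ U = T

/-- `m` is the greatest lower bound of `x` and `y` in `esTam n`. -/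
def IsMeet (x y m : FB n) : Prop :=
  Lhd m x ∧ Lhd m y ∧ ∀ t : FB n, Lhd t x → Lhd t y → Lhd t m

/-- `j` is the least upper bound of `x` and `y` in `esTam n`. -/
def IsJoin (x y j : FB n) : Prop :=
  Lhd x j ∧ Lhd y j ∧ ∀ t : FB n, Lhd x t → Lhd y t → Lhd j t

/-- `T` is join-irreducible: it covers exactly one element. -/
def JoinIrr (T : FB n) : Prop := ∃! S : FB n, CovRel S T

/-- `T` is meet-irreducible: it is covered by exactly one element. -/
def MeetIrr (T : FB n) : Prop := ∃! S : FB n, CovRel T S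

/-- A strict chain `f 0 ⊲ f 1 ⊲ ⋯ ⊲ f m` of length `m`. -/
def IsStrictChain {m : ℕ} (f : Fin (m + 1) → FB n) : Prop :=
  ∀ i j : Fin (m + 1), i < j → Lhd (f i) (f j) ∧ f i ≠ f j

/-- `T` is small: every cell of `T` other than the root is an arrow. -/
def IsSmall (T : FB n) : Prop :=
  ∀ c ∈ T.cells, c ≠ root n → IsLeftArrow T c ∨ IsUpArrow T c

/-- `T` is binary: `T` has no free cells. -/
def IsBinary (T : FB n) : Prop := ∀ c : Cell, ¬ IsFree T c

/-- `c` lies strictly above the up-arrow of `T` in its column. -/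
def PointedUp (T : FB n) (c : Cell) : Prop :=
  ∃ i', c.1 < i' ∧ IsUpArrow T (i', c.2)

/-- `c` is pointed by a left-arrow of `T`: it lies strictly to the left of the
left-arrow of `T` in its row. -/
def PointedLeft (T : FB n) (c : Cell) : Prop :=
  ∃ j', j' < c.2 ∧ IsLeftArrow T (c.1, j')

end EsTam

namespace EsTam

/-- `c` is a changeable cell of type I of `T`: an up-arrow of `T` such that some
cell strictly above it in its column is not pointed by a left-arrow of `T`. -/
def ChangeableI (n : ℕ) (T : FB n) (c : Cell) : Prop :=
  IsUpArrow T c ∧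
    ∃ c' : Cell, c'.2 = c.2 ∧ c'.1 < c.1 ∧ IsCell n c' ∧ ¬ PointedLeft T c'

/-- `c` is a changeable cell of type II of `T`: a left-arrow of `T` such that the
nearest free cell of `T` strictly to its right exists and belongs to `T`. -/
def ChangeableII (n : ℕ) (T : FB n) (c : Cell) : Prop :=
  IsLeftArrow T c ∧
    ∃ m : Cell, m.1 = c.1 ∧ m.2 < c.2 ∧ IsFree T m ∧ m ∈ T.cells ∧
      ∀ j', m.2 < j' → j' < c.2 → ¬ IsFree T (c.1, j')

/-- `c` is a changeable cell of type III of `T`: a free cell of `T` that does not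
belong to `T`. -/
def ChangeableIII (n : ℕ) (T : FB n) (c : Cell) : Prop :=
  IsFree T c ∧ c ∉ T.cells

section Aux

variable {n : ℕ}

lemma row1_no_leftArrow (T : FB n) (j : ℕ) : ¬ IsLeftArrow T ((1, j) : Cell) := by
  rintro ⟨hmem, hne, hleft⟩
  have hc := T.isCell_of_mem _ hmem
  rcases lt_or_eq_of_le hc.2.2.2.1 with h | h
  · exact hleft n h T.root_mem
  · exact hne (show ((1, j) : Cell) = root n by
      have hj : j = n := h; subst hj; rfl)

lemma exists_upArrow_above (T : FB n) {i j : ℕ} (hj : j < n)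
    (h : ∃ i', i' < i ∧ ((i', j) : Cell) ∈ T.cells) :
    ∃ i0, i0 < i ∧ IsUpArrow T ((i0, j) : Cell) := by
  classical
  obtain ⟨i', hi', hmem⟩ := h
  have hex : ∃ k, ((k, j) : Cell) ∈ T.cells := ⟨i', hmem⟩
  refine ⟨Nat.find hex, lt_of_le_of_lt (Nat.find_min' hex hmem) hi',
    Nat.find_spec hex, ?_, ?_⟩
  · intro hr
    have : Nat.find hex = 1 ∧ j = n := by simpa [root, Prod.ext_iff] using hr
    omega
  · intro k hk
    exact Nat.find_min hex hk

lemma exists_leftArrow_row (T : FB n) {i j : ℕ} (hi : 2 ≤ i)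
    (h : ((i, j) : Cell) ∈ T.cells) :
    ∃ j1, j ≤ j1 ∧ IsLeftArrow T ((i, j1) : Cell) := by
  classical
  have hjn : j ≤ n := (T.isCell_of_mem _ h).2.2.2.1
  set P : ℕ → Prop := fun k => ((i, k) : Cell) ∈ T.cells with hP
  have hspec : P (Nat.findGreatest P n) := Nat.findGreatest_spec hjn h
  refine ⟨Nat.findGreatest P n, Nat.le_findGreatest hjn h, hspec, ?_, ?_⟩
  · intro hr
    have : i = 1 ∧ Nat.findGreatest P n = n := by simpa [root, Prod.ext_iff] using hr
    omega
  · intro j' hj' hmem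
    by_cases hj'n : j' ≤ n
    · exact Nat.findGreatest_is_greatest hj' hj'n hmem
    · exact hj'n (T.isCell_of_mem _ hmem).2.2.2.1

lemma changeableI_of_upArrow {T : FB n} {c : Cell} (h : IsUpArrow T c) (hc : 2 ≤ c.1) :
    ChangeableI n T c := by
  have hcell := T.isCell_of_mem _ h.1
  refine ⟨h, ((1, c.2) : Cell), rfl, show 1 < c.1 by omega,
    ⟨le_refl 1, le_trans hcell.1 hcell.2.1, hcell.2.2.1, hcell.2.2.2.1,
      Or.inl one_le_two⟩, ?_⟩
  rintro ⟨j', hj', hla⟩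
  exact row1_no_leftArrow T j' hla

lemma upArrow_transfer {S T : FB n}
    (hI : ∀ c : Cell, ChangeableI n S c ↔ ChangeableI n T c)
    {c : Cell} (h : IsUpArrow S c) : IsUpArrow T c := by
  obtain ⟨ci, cj⟩ := c
  have hcell := S.isCell_of_mem _ h.1
  rcases Nat.lt_or_ge ci 2 with h1 | h2
  · -- row 1
    have hc1 : ci = 1 := by
      have := hcell.1; omega
    subst hc1
    have hc2n : cj < n := by
      rcases lt_or_eq_of_le hcell.2.2.2.1 with h' | h'
      · exact h'
      · exact absurd (show ((1, cj) : Cell) = root n by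
          have hj : cj = n := h'; subst hj; rfl) h.2.1
    have hcj1 : 1 ≤ cj := hcell.2.2.1
    have hmemT : ((1, cj) : Cell) ∈ T.cells := by
      by_contra hcT
      have hborder : ((cj + 1, cj) : Cell) ∈ T.cells := by
        exact T.border_mem ((cj + 1, cj) : Cell)
          ⟨show 2 ≤ cj + 1 by omega, show cj + 1 ≤ n from hc2n,
            show cj = cj + 1 - 1 by omega⟩
      obtain ⟨i0, hi0, hup⟩ := exists_upArrow_above T (i := cj + 2) hc2n
        ⟨cj + 1, by omega, hborder⟩
      have hi02 : 2 ≤ i0 := by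
        rcases Nat.lt_or_ge i0 2 with h' | h'
        · have : i0 = 1 := by
            have := (T.isCell_of_mem _ hup.1).1; omega
          exact absurd (this ▸ hup.1) hcT
        · exact h'
      have hchS : ChangeableI n S ((i0, cj) : Cell) :=
        (hI _).mpr (changeableI_of_upArrow hup hi02)
      exact hchS.1.2.2 1 (by omega) h.1
    refine ⟨hmemT, ?_, ?_⟩
    · intro hr
      have : (1 : ℕ) = 1 ∧ cj = n := by simpa [root, Prod.ext_iff] using hr
      omega
    · intro i' hi' hmem
      have := (T.isCell_of_mem _ hmem).1
      omega
  · exact ((hI _).mp (changeableI_of_upArrow h h2)).1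

lemma free_transfer {S T : FB n}
    (hU : ∀ c : Cell, IsUpArrow S c ↔ IsUpArrow T c)
    (hL : ∀ c : Cell, IsLeftArrow S c ↔ IsLeftArrow T c)
    (c : Cell) : IsFree S c ↔ IsFree T c := by
  constructor
  · rintro ⟨h1, ⟨i', hi', hu⟩, ⟨j', hj', hl⟩⟩
    exact ⟨h1, ⟨i', hi', (hU _).mp hu⟩, ⟨j', hj', (hL _).mp hl⟩⟩
  · rintro ⟨h1, ⟨i', hi', hu⟩, ⟨j', hj', hl⟩⟩
    exact ⟨h1, ⟨i', hi', (hU _).mpr hu⟩, ⟨j', hj', (hL _).mpr hl⟩⟩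

lemma leftArrow_clash {S T : FB n}
    (hII : ∀ c : Cell, ChangeableII n S c ↔ ChangeableII n T c)
    (hIII : ∀ c : Cell, ChangeableIII n S c ↔ ChangeableIII n T c)
    (hU : ∀ c : Cell, IsUpArrow S c ↔ IsUpArrow T c)
    {i a b : ℕ} (hSa : IsLeftArrow S ((i, a) : Cell))
    (hTb : IsLeftArrow T ((i, b) : Cell)) (hba : b < a) : False := by
  classical
  have hbcell := T.isCell_of_mem _ hTb.1
  have hacell := S.isCell_of_mem _ hSa.1
  have han : a ≤ n := hacell.2.2.2.1
  have hb1 : 1 ≤ b := hbcell.2.2.1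
  have hbn : b < n := by omega
  -- up-arrow of T (hence of S) above (i, b)
  have hsup := T.supported _ hTb.1 hTb.2.1
  have habove : ∃ i', i' < i ∧ ((i', b) : Cell) ∈ T.cells := by
    rcases hsup with ⟨j', hj', hmem⟩ | h
    · exact absurd hmem (hTb.2.2 j' hj')
    · exact h
  obtain ⟨i0, hi0, hupT⟩ := exists_upArrow_above T hbn habove
  have hupS : IsUpArrow S ((i0, b) : Cell) := (hU _).mpr hupT
  -- free cells of S in row i between b and a must be dotted in S
  have key : ∀ j, b ≤ j → j < a → IsFree S ((i, j) : Cell) →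
      ((i, j) : Cell) ∈ S.cells := by
    intro j hbj hja hfree
    by_contra hmem
    obtain ⟨hfreeT, -⟩ := (hIII _).mp ⟨hfree, hmem⟩
    obtain ⟨-, -, j', hj', hla⟩ := hfreeT
    exact hTb.2.2 j' (lt_of_le_of_lt hbj hj') hla.1
  have hfb : IsFree S ((i, b) : Cell) :=
    ⟨hbcell, ⟨i0, hi0, hupS⟩, ⟨a, hba, hSa⟩⟩
  set P : ℕ → Prop := fun j => IsFree S ((i, j) : Cell) with hP
  have hble : b ≤ a - 1 := by omega
  have hspec : P (Nat.findGreatest P (a - 1)) := Nat.findGreatest_spec hble hfb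
  have hge : b ≤ Nat.findGreatest P (a - 1) := Nat.le_findGreatest hble hfb
  have hlt : Nat.findGreatest P (a - 1) < a := by
    have := Nat.findGreatest_le (P := P) (a - 1); omega
  have hmem0 : ((i, Nat.findGreatest P (a - 1)) : Cell) ∈ S.cells :=
    key _ hge hlt hspec
  have chII : ChangeableII n S ((i, a) : Cell) := by
    refine ⟨hSa, ((i, Nat.findGreatest P (a - 1)) : Cell), rfl, hlt, hspec, hmem0,
      ?_⟩
    intro j' h1 h2
    exact Nat.findGreatest_is_greatest h1 (by omega)
  have hTa : IsLeftArrow T ((i, a) : Cell) := ((hII _).mp chII).1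
  exact hTb.2.2 a hba hTa.1

lemma leftArrow_transfer {S T : FB n}
    (hII : ∀ c : Cell, ChangeableII n S c ↔ ChangeableII n T c)
    (hIII : ∀ c : Cell, ChangeableIII n S c ↔ ChangeableIII n T c)
    (hU : ∀ c : Cell, IsUpArrow S c ↔ IsUpArrow T c)
    {c : Cell} (h : IsLeftArrow S c) : IsLeftArrow T c := by
  obtain ⟨ci, cj⟩ := c
  have hcell := S.isCell_of_mem _ h.1
  have hci2 : 2 ≤ ci := by
    rcases Nat.lt_or_ge ci 2 with h1 | h2
    · have hc1 : ci = 1 := by have := hcell.1; omega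
      exact absurd (hc1 ▸ h) (row1_no_leftArrow S cj)
    · exact h2
  have hborder : ((ci, ci - 1) : Cell) ∈ T.cells :=
    T.border_mem _ ⟨hci2, hcell.2.1, rfl⟩
  obtain ⟨b, -, hTb⟩ := exists_leftArrow_row T hci2 hborder
  rcases Nat.lt_trichotomy b cj with hlt | heq | hgt
  · exact absurd hlt (by intro h'; exact leftArrow_clash hII hIII hU h hTb h')
  · exact heq ▸ hTb
  · exact absurd hgt (by
      intro h'
      exact leftArrow_clash (fun c => (hII c).symm) (fun c => (hIII c).symm)
        (fun c => (hU c).symm) hTb h h')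

lemma cells_subset {S T : FB n}
    (hIII : ∀ c : Cell, ChangeableIII n S c ↔ ChangeableIII n T c)
    (hU : ∀ c : Cell, IsUpArrow S c ↔ IsUpArrow T c)
    (hL : ∀ c : Cell, IsLeftArrow S c ↔ IsLeftArrow T c) :
    S.cells ⊆ T.cells := by
  intro c hc
  by_cases hroot : c = root n
  · exact hroot ▸ T.root_mem
  by_cases hup : IsUpArrow S c
  · exact ((hU c).mp hup).1
  by_cases hla : IsLeftArrow S c
  · exact ((hL c).mp hla).1
  have hcell := S.isCell_of_mem _ hc
  have h1 : ∃ j', c.2 < j' ∧ ((c.1, j') : Cell) ∈ S.cells := by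
    by_contra hno
    push_neg at hno
    exact hla ⟨hc, hroot, fun j' hj' => hno j' hj'⟩
  have h2 : ∃ i', i' < c.1 ∧ ((i', c.2) : Cell) ∈ S.cells := by
    by_contra hno
    push_neg at hno
    exact hup ⟨hc, hroot, fun i' hi' => hno i' hi'⟩
  have hci2 : 2 ≤ c.1 := by
    rcases Nat.lt_or_ge c.1 2 with hl1 | hl2
    · exfalso
      apply hup
      refine ⟨hc, hroot, fun i' hi' hm => ?_⟩
      have := (S.isCell_of_mem _ hm).1
      have := hcell.1
      omega
    · exact hl2
  obtain ⟨j', hj', hmem'⟩ := h1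
  obtain ⟨j1, hj1ge, hlaS⟩ := exists_leftArrow_row S hci2 hmem'
  have hj1n : j1 ≤ n := (S.isCell_of_mem _ hlaS.1).2.2.2.1
  have hc2n : c.2 < n := by omega
  obtain ⟨i0, hi0, hupS⟩ := exists_upArrow_above S hc2n h2
  have hfreeS : IsFree S c :=
    ⟨hcell, ⟨i0, hi0, hupS⟩, ⟨j1, lt_of_lt_of_le hj' hj1ge, hlaS⟩⟩
  have hfreeT : IsFree T c := (free_transfer hU hL c).mp hfreeS
  by_contra hcT
  exact ((hIII c).mpr ⟨hfreeT, hcT⟩).2 hc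

end Aux

/-- an fb-tableau is uniquely determined by its changeable cells
together with their types. -/
theorem determined_by_changeables (n : ℕ) (hn : 1 ≤ n) :
    ∀ S T : FB n,
      (∀ c : Cell, ChangeableI n S c ↔ ChangeableI n T c) →
      (∀ c : Cell, ChangeableII n S c ↔ ChangeableII n T c) →
      (∀ c : Cell, ChangeableIII n S c ↔ ChangeableIII n T c) →
      S = T := by
  intro S T hI hII hIII
  have hU : ∀ c : Cell, IsUpArrow S c ↔ IsUpArrow T c := fun c =>
    ⟨upArrow_transfer hI, upArrow_transfer (fun c => (hI c).symm)⟩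
  have hL : ∀ c : Cell, IsLeftArrow S c ↔ IsLeftArrow T c := fun c =>
    ⟨leftArrow_transfer hII hIII hU,
      leftArrow_transfer (fun c => (hII c).symm) (fun c => (hIII c).symm)
        (fun c => (hU c).symm)⟩
  have hcells : S.cells = T.cells :=
    Set.Subset.antisymm (cells_subset hIII hU hL)
      (cells_subset (fun c => (hIII c).symm) (fun c => (hU c).symm)
        (fun c => (hL c).symm))
  cases S
  cases T
  simp only [FB.mk.injEq]
  exact hcells

end EsTam
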